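/- The function z ↦ 28 sin z + sin 2z − z (18 + 12 cos z) is O(z⁷) as z → 0 but is not O(z⁸). Equivalently, the numerical wavenumber f₆(z) = (28 sin z + sin 2z)/(18 + 12 cos z) satisfies f₆(z) = z + O(z⁷), i.e. it corresponds to an exactly sixth-order accurate scheme. -/

import Mathlib

open Asymptotics Filter Real Complex Finset

noncomputable def E (x : ℂ) : ℂ := Complex.exp x - ∑ m ∈ Finset.range 8, x ^ m / m.factorial

lemma E_bound {x : ℂ} (hx : ‖x‖ ≤ 1) :
    ‖E x‖ ≤ ‖x‖ ^ 8 * (9 / 322560) := by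
  have := Complex.exp_bound hx (n := 8) (by norm_num)
  simpa [E, Nat.factorial] using this.trans_eq (by norm_num [Nat.factorial])

lemma key_identity (z : ℂ) :
    28 * Complex.sin z + Complex.sin (2*z) - z * (18 + 12 * Complex.cos z) + z^7/70
      = (-14*Complex.I - 6*z) * E (Complex.I*z) + (14*Complex.I - 6*z) * E (-(Complex.I*z))
        - (Complex.I/2) * E (2*(Complex.I*z)) + (Complex.I/2) * E (-(2*(Complex.I*z))) := by
  simp only [E, Complex.sin, Complex.cos, Finset.sum_range_succ, Finset.sum_range_zero]
  push_cast [Nat.factorial]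
  have h : Complex.exp (2*z*Complex.I) = Complex.exp (2*(Complex.I*z)) := by ring_nf
  have h2 : Complex.exp (-(2*z)*Complex.I) = Complex.exp (-(2*(Complex.I*z))) := by ring_nf
  have h3 : Complex.exp (z*Complex.I) = Complex.exp (Complex.I*z) := by ring_nf
  have h4 : Complex.exp (-z*Complex.I) = Complex.exp (-(Complex.I*z)) := by ring_nf
  rw [h, h2, h3, h4]
  linear_combination (-30*z - 6*z^3*Complex.I^2 - (1/2)*z^5*Complex.I^4 + (1/70)*z^7
    - (1/70)*z^7*Complex.I^2 + (1/70)*z^7*Complex.I^4 - (13/420)*z^7*Complex.I^6) * Complex.I_sq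

lemma key_bound {x : ℝ} (hx : |x| ≤ 1/2) :
    |28 * Real.sin x + Real.sin (2*x) - x * (18 + 12 * Real.cos x) + x^7/70| ≤ |x|^8 := by
  have h1 : ‖Complex.I * x‖ ≤ 1 := by
    simpa [abs_mul] using hx.trans (by norm_num)
  have h2 : ‖2 * (Complex.I * x)‖ ≤ 1 := by
    rw [norm_mul, norm_mul]
    simp only [Complex.norm_two, Complex.norm_I, Complex.norm_real, Real.norm_eq_abs, one_mul]
    linarith [hx]
  have hid := key_identity (x : ℂ)
  have hb1 := E_bound h1
  have hb2 := E_bound h2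
  have hb1' := E_bound (x := -(Complex.I * x)) (by simpa using h1)
  have hb2' := E_bound (x := -(2 * (Complex.I * x))) (by simpa using h2)
  have habs : ‖Complex.I * (x:ℂ)‖ = |x| := by simp
  have habs2 : ‖2 * (Complex.I * (x:ℂ))‖ = 2 * |x| := by
    simp [norm_mul]
  rw [habs] at hb1
  rw [(by simpa [norm_neg] using habs : ‖-(Complex.I * (x:ℂ))‖ = |x|)] at hb1'
  rw [habs2] at hb2
  rw [(by simpa [norm_neg] using habs2 : ‖-(2*(Complex.I * (x:ℂ)))‖ = 2*|x|)] at hb2'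
  -- bound coefficients
  have hc1 : ‖-14*Complex.I - 6*(x:ℂ)‖ ≤ 17 := by
    calc ‖-14*Complex.I - 6*(x:ℂ)‖
        ≤ ‖-14*Complex.I‖ + ‖6*(x:ℂ)‖ := by
          simpa [sub_eq_add_neg] using norm_add_le (-14*Complex.I) (-(6*(x:ℂ)))
      _ ≤ 14 + 3 := by
          gcongr <;> simp [norm_mul, Complex.norm_real] <;> nlinarith [hx, abs_nonneg x]
      _ ≤ 17 := by norm_num
  have hc2 : ‖14*Complex.I - 6*(x:ℂ)‖ ≤ 17 := by
    calc ‖14*Complex.I - 6*(x:ℂ)‖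
        ≤ ‖14*Complex.I‖ + ‖6*(x:ℂ)‖ := by
          simpa [sub_eq_add_neg] using norm_add_le (14*Complex.I) (-(6*(x:ℂ)))
      _ ≤ 14 + 3 := by
          gcongr <;> simp [norm_mul, Complex.norm_real] <;> nlinarith [hx, abs_nonneg x]
      _ ≤ 17 := by norm_num
  have key : ‖28 * Complex.sin x + Complex.sin (2*(x:ℂ)) - (x:ℂ) * (18 + 12 * Complex.cos x) + (x:ℂ)^7/70‖ ≤ |x|^8 := by
    rw [hid]
    have t1 : ‖(-14*Complex.I - 6*(x:ℂ)) * E (Complex.I*x)‖ ≤ 17 * (|x|^8 * (9/322560)) := by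
      rw [norm_mul]; gcongr
    have t2 : ‖(14*Complex.I - 6*(x:ℂ)) * E (-(Complex.I*x))‖ ≤ 17 * (|x|^8 * (9/322560)) := by
      rw [norm_mul]; gcongr
    have hchalf : ‖Complex.I/2‖ = 1/2 := by simp [norm_div]
    have t3 : ‖(Complex.I/2) * E (2*(Complex.I*x))‖ ≤ (1/2) * ((2*|x|)^8 * (9/322560)) := by
      rw [norm_mul, hchalf]; gcongr
    have t4 : ‖(Complex.I/2) * E (-(2*(Complex.I*x)))‖ ≤ (1/2) * ((2*|x|)^8 * (9/322560)) := by
      rw [norm_mul, hchalf]; gcongr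
    calc ‖(-14*Complex.I - 6*(x:ℂ)) * E (Complex.I*x) + (14*Complex.I - 6*(x:ℂ)) * E (-(Complex.I*x))
            - (Complex.I/2) * E (2*(Complex.I*x)) + (Complex.I/2) * E (-(2*(Complex.I*x)))‖
        ≤ ‖(-14*Complex.I - 6*(x:ℂ)) * E (Complex.I*x)‖ + ‖(14*Complex.I - 6*(x:ℂ)) * E (-(Complex.I*x))‖
          + ‖(Complex.I/2) * E (2*(Complex.I*x))‖ + ‖(Complex.I/2) * E (-(2*(Complex.I*x)))‖ := by
          calc ‖(-14*Complex.I - 6*(x:ℂ)) * E (Complex.I*x) + (14*Complex.I - 6*(x:ℂ)) * E (-(Complex.I*x)) - (Complex.I/2) * E (2*(Complex.I*x)) + (Complex.I/2) * E (-(2*(Complex.I*x)))‖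
              ≤ ‖(-14*Complex.I - 6*(x:ℂ)) * E (Complex.I*x) + (14*Complex.I - 6*(x:ℂ)) * E (-(Complex.I*x)) - (Complex.I/2) * E (2*(Complex.I*x))‖ + ‖(Complex.I/2) * E (-(2*(Complex.I*x)))‖ := norm_add_le _ _
            _ ≤ (‖(-14*Complex.I - 6*(x:ℂ)) * E (Complex.I*x) + (14*Complex.I - 6*(x:ℂ)) * E (-(Complex.I*x))‖ + ‖(Complex.I/2) * E (2*(Complex.I*x))‖) + ‖(Complex.I/2) * E (-(2*(Complex.I*x)))‖ := by
                gcongr; exact norm_sub_le _ _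
            _ ≤ ‖(-14*Complex.I - 6*(x:ℂ)) * E (Complex.I*x)‖ + ‖(14*Complex.I - 6*(x:ℂ)) * E (-(Complex.I*x))‖ + ‖(Complex.I/2) * E (2*(Complex.I*x))‖ + ‖(Complex.I/2) * E (-(2*(Complex.I*x)))‖ := by
                gcongr; exact norm_add_le _ _
      _ ≤ 17 * (|x|^8 * (9/322560)) + 17 * (|x|^8 * (9/322560)) + (1/2) * ((2*|x|)^8 * (9/322560)) + (1/2) * ((2*|x|)^8 * (9/322560)) := by
          gcongr
      _ ≤ |x|^8 := by ring_nf; nlinarith [pow_nonneg (abs_nonneg x) 8]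
  calc |28 * Real.sin x + Real.sin (2*x) - x * (18 + 12 * Real.cos x) + x^7/70|
      = ‖((28 * Real.sin x + Real.sin (2*x) - x * (18 + 12 * Real.cos x) + x^7/70 : ℝ) : ℂ)‖ := by
        rw [Complex.norm_real, Real.norm_eq_abs]
    _ ≤ |x|^8 := by push_cast; exact key

/-- `28 sin z + sin 2z - z (18 + 12 cos z)` is `O(z⁷)` as `z → 0` but not `O(z⁸)`:
the numerical wavenumber `f₆(z) = (28 sin z + sin 2z)/(18 + 12 cos z)` corresponds to an
exactly sixth-order accurate scheme. -/
theorem f6_exactly_sixth_order :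
    ((fun z : ℝ => 28 * Real.sin z + Real.sin (2*z) - z * (18 + 12 * Real.cos z))
        =O[nhds (0:ℝ)] (fun z : ℝ => z ^ 7))
    ∧ ¬ ((fun z : ℝ => 28 * Real.sin z + Real.sin (2*z) - z * (18 + 12 * Real.cos z))
        =O[nhds (0:ℝ)] (fun z : ℝ => z ^ 8)) := by
  set g : ℝ → ℝ := fun z => 28 * Real.sin z + Real.sin (2*z) - z * (18 + 12 * Real.cos z) with hg
  have hsmall : ∀ᶠ x : ℝ in nhds 0, |x| ≤ 1/2 := by
    have : Metric.closedBall (0:ℝ) (1/2) ∈ nhds (0:ℝ) :=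
      Metric.closedBall_mem_nhds 0 (by norm_num)
    filter_upwards [this] with x hx
    simpa [Real.dist_eq] using hx
  have hkey : ∀ x : ℝ, |x| ≤ 1/2 → |g x + x^7/70| ≤ |x|^8 := fun x hx => key_bound hx
  constructor
  · rw [isBigO_iff]
    refine ⟨1, ?_⟩
    filter_upwards [hsmall] with x hx
    have h1 := hkey x hx
    have h2 : |g x| ≤ |x^7/70| + |x|^8 := by
      calc |g x| = |(g x + x^7/70) + (-(x^7/70))| := by ring_nf
        _ ≤ |g x + x^7/70| + |(-(x^7/70))| := abs_add_le _ _
        _ ≤ |x|^8 + |x^7/70| := by rw [abs_neg]; gcongr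
        _ = |x^7/70| + |x|^8 := by ring
    have h3 : |x|^8 ≤ (1/2) * |x|^7 := by
      calc |x|^8 = |x| * |x|^7 := by ring
        _ ≤ (1/2) * |x|^7 := by gcongr
    have h4 : |x^7/70| = (1/70) * |x|^7 := by
      rw [abs_div, _root_.abs_pow, abs_of_pos (by norm_num : (0:ℝ) < 70)]; ring
    calc ‖g x‖ ≤ (1/70) * |x|^7 + (1/2) * |x|^7 := by
          rw [Real.norm_eq_abs]; rw [h4] at h2; linarith
      _ ≤ 1 * |x|^7 := by nlinarith [pow_nonneg (abs_nonneg x) 7]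
      _ = 1 * ‖x^7‖ := by rw [Real.norm_eq_abs, _root_.abs_pow]
  · intro h
    rw [isBigO_iff] at h
    obtain ⟨c, hc⟩ := h
    have hall : ∀ᶠ x : ℝ in nhds 0, |g x| ≤ c * |x|^8 ∧ |x| ≤ 1/2 := by
      filter_upwards [hc, hsmall] with x h1 h2
      refine ⟨?_, h2⟩
      simpa [Real.norm_eq_abs, _root_.abs_pow] using h1
    obtain ⟨δ, hδ, hball⟩ := Metric.eventually_nhds_iff.mp hall
    set x : ℝ := min (δ/2) (1/(141*(|c|+2))) with hxdef
    have hxpos : 0 < x := by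
      apply lt_min (by linarith) (by positivity)
    have hxδ : dist x 0 < δ := by
      rw [Real.dist_eq, sub_zero, abs_of_pos hxpos]
      calc x ≤ δ/2 := min_le_left _ _
        _ < δ := by linarith
    obtain ⟨h1, h2⟩ := hball hxδ
    have hx2 : |x| = x := abs_of_pos hxpos
    have hk := hkey x h2
    -- x^7/70 ≤ |g x| + x^8 ≤ c x^8 + x^8
    have h5 : x^7/70 ≤ |g x| + x^8 := by
      have hlow : |x^7/70| - |g x| ≤ |g x + x^7/70| := by
        have h := abs_sub_abs_le_abs_sub (x^7/70) (-(g x))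
        simp only [sub_neg_eq_add, abs_neg] at h
        calc |x^7/70| - |g x| ≤ |x^7/70 + g x| := h
          _ = |g x + x^7/70| := by ring_nf
      have h7 : |x^7/70| = x^7/70 := abs_of_pos (by positivity)
      have hk' : |g x + x^7/70| ≤ x^8 := by rwa [hx2] at hk
      linarith
    have h6 : |g x| ≤ (|c|+1) * x^8 := by
      calc |g x| ≤ c * |x|^8 := h1
        _ ≤ (|c|+1) * x^8 := by
          rw [hx2]; have : c ≤ |c| + 1 := (le_abs_self c).trans (by linarith)
          nlinarith [pow_nonneg hxpos.le 8]
    have h9 : x^7/70 ≤ (|c|+2) * x^8 := by nlinarith [pow_nonneg hxpos.le 8]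
    have h10 : (1:ℝ)/70 ≤ (|c|+2) * x := by
      have hx7 : 0 < x^7 := by positivity
      have hmul : x^7 * (1/70) ≤ x^7 * ((|c|+2) * x) := by nlinarith [h9]
      exact (mul_le_mul_iff_right₀ hx7).mp hmul
    have h11 : x ≤ 1/(141*(|c|+2)) := min_le_right _ _
    have h12 : (|c|+2) * x ≤ 1/141 := by
      have hpos : (0:ℝ) < |c|+2 := by positivity
      calc (|c|+2) * x ≤ (|c|+2) * (1/(141*(|c|+2))) := by gcongr
        _ = 1/141 := by field_simp
    linarith
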